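/- arXiv:2405.03888 — 6 statements merged into one kernel-verified Lean document; each statement's English description precedes it below -/
import Mathlib

section
/- Suppose Q is a strongly continuous stochastic kernel from S × U to S, meaning (s,u) ↦ ∫ g(s') Q(ds'|s,u) is continuous and bounded for every bounded measurable g. If (νₙ, φₙ) is a sequence of (probability measure, kernel) pairs such that the induced joint measures converge weakly to that of (ν, φ), then F(νₙ, φₙ) converges setwise to F(ν, φ), where F(ν,φ)(·) = ∫_S ∫_U Q(·|s,u) φ(du|s) dν(s). In particular, the deterministic transition map F is weakly continuous, i.e., ∫ g(μ) q̄(dμ|ν,φ) = g(F(ν,φ)) is continuous in (ν,φ) for every bounded continuous g on the space of probability measures, where q̄ is the Dirac kernel concentrated at F(ν,φ). -/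
open MeasureTheory ProbabilityTheory Filter
open scoped ENNReal

/-- If `Q` is a strongly continuous stochastic kernel (the map
`(s,u) ↦ ∫ g dQ(·|s,u)` is continuous for every bounded measurable `g`) and the
joint measures `νₙ ⊗ φₙ` converge weakly to `ν ⊗ φ`, then the measurized
transitions `F(νₙ, φₙ)` converge setwise to `F(ν, φ)`, where
`F(ν,φ) = (ν ⊗ φ).bind Q`. -/
theorem stmt4 {S U : Type*}
    [TopologicalSpace S] [MeasurableSpace S] [BorelSpace S]
    [TopologicalSpace U] [MeasurableSpace U] [BorelSpace U]
    (Q : Kernel (S × U) S) [IsMarkovKernel Q]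
    (hQ : ∀ g : S → ℝ, Measurable g → (∃ C : ℝ, ∀ x, |g x| ≤ C) →
      Continuous (fun p : S × U => ∫ s', g s' ∂(Q p)))
    (ν : Measure S) [IsProbabilityMeasure ν] (φ : Kernel S U) [IsMarkovKernel φ]
    (νs : ℕ → Measure S) [∀ n, IsProbabilityMeasure (νs n)]
    (φs : ℕ → Kernel S U) [∀ n, IsMarkovKernel (φs n)]
    (hweak : ∀ g : S × U → ℝ, Continuous g → (∃ C : ℝ, ∀ p, |g p| ≤ C) →
      Tendsto (fun n => ∫ p, g p ∂((νs n).compProd (φs n))) atTop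
        (nhds (∫ p, g p ∂(ν.compProd φ)))) :
    ∀ A : Set S, MeasurableSet A →
      Tendsto (fun n => ((νs n).compProd (φs n)).bind (fun p => Q p) A) atTop
        (nhds ((ν.compProd φ).bind (fun p => Q p) A)) := by
  intro A hA
  -- indicator function
  set g : S → ℝ := A.indicator 1 with hg
  have hgm : Measurable g := (measurable_const.indicator hA)
  have hgb : ∃ C : ℝ, ∀ x, |g x| ≤ C := by
    refine ⟨1, fun x => ?_⟩
    by_cases hx : x ∈ A <;> simp [hg, Set.indicator, hx]
  have hcont : Continuous (fun p : S × U => ∫ s', g s' ∂(Q p)) := hQ g hgm hgb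
  have hint : ∀ p : S × U, ∫ s', g s' ∂(Q p) = (Q p A).toReal := by
    intro p
    simp [hg, integral_indicator_one hA]; rfl
  have hcont' : Continuous (fun p : S × U => (Q p A).toReal) := by
    simpa [hint] using hcont
  have hb' : ∃ C : ℝ, ∀ p : S × U, |(Q p A).toReal| ≤ C := by
    refine ⟨1, fun p => ?_⟩
    rw [abs_of_nonneg ENNReal.toReal_nonneg]
    exact ENNReal.toReal_le_of_le_ofReal zero_le_one (by simpa using prob_le_one)
  have key := hweak _ hcont' hb'
  have hQm : Measurable fun p : S × U => Q p A := Q.measurable_coe hA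
  have hbind : ∀ (μ : Measure (S × U)), μ.bind (fun p => Q p) A = ∫⁻ p, Q p A ∂μ := by
    intro μ
    exact Measure.bind_apply hA Q.measurable.aemeasurable
  have hint' : ∀ (μ : Measure (S × U)) [IsProbabilityMeasure μ],
      ∫ p, (Q p A).toReal ∂μ = (∫⁻ p, Q p A ∂μ).toReal := by
    intro μ _
    rw [integral_toReal hQm.aemeasurable]
    exact ae_of_all _ fun p => lt_of_le_of_lt prob_le_one ENNReal.one_lt_top
  have hfin : ∀ (μ : Measure (S × U)) [IsProbabilityMeasure μ], ∫⁻ p, Q p A ∂μ ≠ ⊤ := by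
    intro μ _
    refine ne_top_of_le_ne_top (by simp : (1 : ℝ≥0∞) ≠ ⊤) ?_
    calc ∫⁻ p, Q p A ∂μ ≤ ∫⁻ _, 1 ∂μ := lintegral_mono fun p => prob_le_one
    _ = 1 := by simp
  simp only [hbind]
  rw [← ENNReal.tendsto_toReal_iff (fun n => hfin _) (hfin _)]
  simpa [hint'] using key
end

section
/- Suppose V* : S → ℝ is bounded measurable and satisfies the discounted optimality equation V*(s) = sup_{u ∈ U(s)} { r(s,u) + α ∫ V*(s') Q(ds'|s,u) } for all s, with the supremum attained by a measurable selector f*. Define V̄*(ν) = ∫_S V* dν. Then for every probability measure ν on S, V̄*(ν) = sup_{φ ∈ Φ} { r̄(ν,φ) + α V̄*(F(ν,φ)) }, where Φ is the set of stochastic kernels φ with φ(U(s)|s) = 1 for all s, r̄(ν,φ) = ∫∫ r dφ dν, and F(ν,φ) is the measurized transition; moreover the supremum is attained by the kernel φ* concentrated on f*, i.e., φ*(·|s) = δ_{f*(s)}, independently of ν. -/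
open MeasureTheory ProbabilityTheory

/-- The measurized (deterministic) transition. -/
noncomputable def measurizedF {S U : Type*} [MeasurableSpace S] [MeasurableSpace U]
    (Q : Kernel (S × U) S) (φ : Kernel S U) (ν : Measure S) : Measure S :=
  ν.bind (fun s => (φ s).bind (fun u => Q (s, u)))

/-- The measurized reward `r̄(ν, φ)`. -/
noncomputable def measurizedReward {S U : Type*} [MeasurableSpace S] [MeasurableSpace U]
    (r : S × U → ℝ) (φ : Kernel S U) (ν : Measure S) : ℝ :=
  ∫ s, ∫ u, r (s, u) ∂(φ s) ∂ν

/-- Integral of a bounded measurable function over a bind of a measure with a kernel. -/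
lemma integral_bind_kernel_aux {S T : Type*} [MeasurableSpace S] [MeasurableSpace T]
    (ν : Measure S) [IsFiniteMeasure ν] (κ : Kernel S T) [IsMarkovKernel κ]
    {V : T → ℝ} (hVm : Measurable V) {CV : ℝ} (hVb : ∀ t, |V t| ≤ CV) :
    ∫ t, V t ∂(ν.bind (κ ·)) = ∫ s, ∫ t, V t ∂(κ s) ∂ν := by
  have hbind : ν.bind (κ ·) = (ν ⊗ₘ κ).map Prod.snd := by
    ext t ht
    rw [Measure.bind_apply ht κ.measurable.aemeasurable, Measure.map_apply measurable_snd ht,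
      Measure.compProd_apply (measurable_snd ht)]
    rfl
  have hint : Integrable (fun p : S × T => V p.2) (ν ⊗ₘ κ) := by
    refine Integrable.mono' (integrable_const CV)
      ((hVm.comp measurable_snd).aestronglyMeasurable) (ae_of_all _ fun p => ?_)
    simpa [Real.norm_eq_abs] using hVb p.2
  rw [hbind, integral_map measurable_snd.aemeasurable hVm.aestronglyMeasurable]
  exact Measure.integral_compProd hint

/-- If the bounded measurable `V*` satisfies the discounted
optimality equation with the supremum attained by a measurable selector `f*`,
then `V̄*(ν) = ∫ V* dν` satisfies the measurized optimality equation
`V̄*(ν) = sup_{φ ∈ Φ} { r̄(ν,φ) + α V̄*(F(ν,φ)) }`, with the supremum attained —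
independently of `ν` — by the kernel `φ*` concentrated on `f*`. -/
theorem stmt8 {S U : Type*} [MeasurableSpace S] [MeasurableSpace U]
    (Q : Kernel (S × U) S) [IsMarkovKernel Q]
    (Uset : S → Set U) (hUm : ∀ s, MeasurableSet (Uset s))
    (r : S × U → ℝ) (hrm : Measurable r) (C : ℝ) (hrb : ∀ p, |r p| ≤ C)
    (α : ℝ) (hα0 : 0 ≤ α) (hα1 : α < 1)
    (V : S → ℝ) (hVm : Measurable V) (CV : ℝ) (hVb : ∀ s, |V s| ≤ CV)
    (hub : ∀ s, ∀ u ∈ Uset s, r (s, u) + α * ∫ s', V s' ∂(Q (s, u)) ≤ V s)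
    (f : S → U) (hfm : Measurable f) (hff : ∀ s, f s ∈ Uset s)
    (hfopt : ∀ s, V s = r (s, f s) + α * ∫ s', V s' ∂(Q (s, f s))) :
    ∀ ν : Measure S, IsProbabilityMeasure ν →
      (∀ φ : Kernel S U, IsMarkovKernel φ → (∀ s, φ s (Uset s) = 1) →
        measurizedReward r φ ν + α * ∫ s, V s ∂(measurizedF Q φ ν) ≤ ∫ s, V s ∂ν) ∧
      ∫ s, V s ∂ν
        = measurizedReward r (Kernel.deterministic f hfm) ν
          + α * ∫ s, V s ∂(measurizedF Q (Kernel.deterministic f hfm) ν) := by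
  intro ν hν
  -- the expected-next-value function w(s,u) = ∫ V dQ(·|s,u)
  set w : S × U → ℝ := fun p => ∫ s', V s' ∂(Q p) with hw_def
  have hwsm : StronglyMeasurable w :=
    StronglyMeasurable.integral_kernel_prod_right' (κ := Q)
      ((hVm.comp measurable_snd).stronglyMeasurable
        (f := fun q : (S × U) × S => V q.2))
  have hwb : ∀ p, |w p| ≤ CV := by
    intro p
    rw [← Real.norm_eq_abs]
    calc ‖∫ s', V s' ∂(Q p)‖ ≤ CV * ((Q p) Set.univ).toReal :=
          norm_integral_le_of_norm_le_const (ae_of_all _ fun s' => by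
            simpa [Real.norm_eq_abs] using hVb s')
      _ = CV := by simp
  -- key computation: integral of V against measurized transition
  have key : ∀ (φ : Kernel S U), IsMarkovKernel φ →
      ∫ s, V s ∂(measurizedF Q φ ν) = ∫ s, ∫ u, w (s, u) ∂(φ s) ∂ν := by
    intro φ hφ
    have hη : ∀ s, (Kernel.snd (φ ⊗ₖ Q)) s = (φ s).bind (fun u => Q (s, u)) := by
      intro s
      ext t ht
      rw [Kernel.snd_apply' _ _ ht,
        Kernel.compProd_apply (show MeasurableSet (Prod.snd ⁻¹' t) from measurable_snd ht),
        Measure.bind_apply ht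
          (show Measurable (fun u => Q (s, u)) from Q.measurable.comp measurable_prodMk_left).aemeasurable]
      rfl
    have hF : measurizedF Q φ ν = ν.bind ((Kernel.snd (φ ⊗ₖ Q)) ·) := by
      unfold measurizedF
      congr 1
      funext s
      exact (hη s).symm
    rw [hF, integral_bind_kernel_aux ν _ hVm hVb]
    refine integral_congr_ae (ae_of_all _ fun s => ?_)
    beta_reduce
    have hcomap : (Kernel.snd (φ ⊗ₖ Q)) s
        = (φ s).bind ((Q.comap (Prod.mk s) measurable_prodMk_left) ·) := hη s
    rw [hcomap, integral_bind_kernel_aux (φ s) _ hVm hVb]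
    rfl
  -- integrability / measurability facts
  have hVint : Integrable V ν := by
    refine Integrable.mono' (integrable_const CV) hVm.aestronglyMeasurable
      (ae_of_all _ fun s => ?_)
    simpa [Real.norm_eq_abs] using hVb s
  constructor
  · -- the inequality for every admissible kernel φ
    intro φ hφ hφU
    have hG : ∀ s u, u ∈ Uset s → r (s, u) + α * w (s, u) ≤ V s := fun s u hu => hub s u hu
    -- G = r + α w, bounded and measurable
    set G : S × U → ℝ := fun p => r p + α * w p with hG_def
    have hGsm : StronglyMeasurable G :=
      hrm.stronglyMeasurable.add (hwsm.const_smul α)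
    have hGb : ∀ p, |G p| ≤ C + α * CV := by
      intro p
      calc |r p + α * w p| ≤ |r p| + |α * w p| := abs_add_le _ _
        _ ≤ C + α * CV := by
            refine add_le_add (hrb p) ?_
            rw [abs_mul, abs_of_nonneg hα0]
            exact mul_le_mul_of_nonneg_left (hwb p) hα0
    -- pointwise: ∫ G(s,·) dφ(s) ≤ V s
    have hGint : ∀ s, Integrable (fun u => G (s, u)) (φ s) := by
      intro s
      refine Integrable.mono' (integrable_const (C + α * CV))
        ((hGsm.comp_measurable measurable_prodMk_left).aestronglyMeasurable)
        (ae_of_all _ fun u => ?_)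
      simpa [Real.norm_eq_abs] using hGb (s, u)
    have hpoint : ∀ s, ∫ u, G (s, u) ∂(φ s) ≤ V s := by
      intro s
      have hcompl : (φ s) (Uset s)ᶜ = 0 := by
        rw [measure_compl (hUm s) (measure_ne_top _ _), measure_univ, hφU s, tsub_self]
      have haemem : ∀ᵐ u ∂(φ s), u ∈ Uset s := by
        rw [ae_iff]
        exact hcompl
      have hae : ∀ᵐ u ∂(φ s), G (s, u) ≤ V s := haemem.mono fun u hu => hG s u hu
      calc ∫ u, G (s, u) ∂(φ s) ≤ ∫ _, V s ∂(φ s) :=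
            integral_mono_ae (hGint s) (integrable_const _) hae
        _ = V s := by simp
    -- integrability over ν
    have hGint_ν : Integrable (fun s => ∫ u, G (s, u) ∂(φ s)) ν := by
      refine Integrable.mono' (integrable_const (C + α * CV))
        (hGsm.integral_kernel_prod_right').aestronglyMeasurable
        (ae_of_all _ fun s => ?_)
      calc ‖∫ u, G (s, u) ∂(φ s)‖ ≤ (C + α * CV) * ((φ s) Set.univ).toReal :=
            norm_integral_le_of_norm_le_const (ae_of_all _ fun u => by
              simpa [Real.norm_eq_abs] using hGb (s, u))
        _ = C + α * CV := by simp
    have hrint : ∀ s, Integrable (fun u => r (s, u)) (φ s) := by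
      intro s
      refine Integrable.mono' (integrable_const C)
        ((hrm.comp measurable_prodMk_left).aestronglyMeasurable)
        (ae_of_all _ fun u => by simpa [Real.norm_eq_abs] using hrb (s, u))
    have hwint : ∀ s, Integrable (fun u => w (s, u)) (φ s) := by
      intro s
      refine Integrable.mono' (integrable_const CV)
        ((hwsm.comp_measurable measurable_prodMk_left).aestronglyMeasurable)
        (ae_of_all _ fun u => by simpa [Real.norm_eq_abs] using hwb (s, u))
    have hIr : Integrable (fun s => ∫ u, r (s, u) ∂(φ s)) ν := by
      refine Integrable.mono' (integrable_const C)
        (hrm.stronglyMeasurable.integral_kernel_prod_right').aestronglyMeasurable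
        (ae_of_all _ fun s => ?_)
      calc ‖∫ u, r (s, u) ∂(φ s)‖ ≤ C * ((φ s) Set.univ).toReal :=
            norm_integral_le_of_norm_le_const (ae_of_all _ fun u => by
              simpa [Real.norm_eq_abs] using hrb (s, u))
        _ = C := by simp
    have hIw : Integrable (fun s => ∫ u, w (s, u) ∂(φ s)) ν := by
      refine Integrable.mono' (integrable_const CV)
        (hwsm.integral_kernel_prod_right').aestronglyMeasurable
        (ae_of_all _ fun s => ?_)
      calc ‖∫ u, w (s, u) ∂(φ s)‖ ≤ CV * ((φ s) Set.univ).toReal :=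
            norm_integral_le_of_norm_le_const (ae_of_all _ fun u => by
              simpa [Real.norm_eq_abs] using hwb (s, u))
        _ = CV := by simp
    have hsplit : measurizedReward r φ ν + α * ∫ s, V s ∂(measurizedF Q φ ν)
        = ∫ s, ∫ u, G (s, u) ∂(φ s) ∂ν := by
      rw [key φ hφ]
      unfold measurizedReward
      rw [← integral_const_mul, ← integral_add hIr (hIw.const_mul α)]
      refine integral_congr_ae (ae_of_all _ fun s => ?_)
      beta_reduce
      rw [← integral_const_mul, ← integral_add (hrint s) ((hwint s).const_mul α)]
    rw [hsplit]
    exact integral_mono hGint_ν hVint hpoint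
  · -- equality for the deterministic kernel φ*
    have hdet : ∀ s, (Kernel.deterministic f hfm) s = Measure.dirac (f s) := fun s =>
      Kernel.deterministic_apply hfm s
    have h1 : measurizedReward r (Kernel.deterministic f hfm) ν = ∫ s, r (s, f s) ∂ν := by
      unfold measurizedReward
      refine integral_congr_ae (ae_of_all _ fun s => ?_)
      beta_reduce
      rw [hdet s]
      exact integral_dirac' _ _ ((hrm.comp measurable_prodMk_left).stronglyMeasurable)
    have h2 : ∫ s, V s ∂(measurizedF Q (Kernel.deterministic f hfm) ν)
        = ∫ s, w (s, f s) ∂ν := by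
      rw [key _ inferInstance]
      refine integral_congr_ae (ae_of_all _ fun s => ?_)
      beta_reduce
      rw [hdet s]
      exact integral_dirac' _ _ (hwsm.comp_measurable measurable_prodMk_left)
    rw [h1, h2]
    have hintr : Integrable (fun s => r (s, f s)) ν := by
      refine Integrable.mono' (integrable_const C)
        ((hrm.comp (measurable_id.prodMk hfm)).aestronglyMeasurable)
        (ae_of_all _ fun s => by simpa [Real.norm_eq_abs] using hrb (s, f s))
    have hintw : Integrable (fun s => w (s, f s)) ν := by
      refine Integrable.mono' (integrable_const CV)
        ((hwsm.comp_measurable (measurable_id.prodMk hfm)).aestronglyMeasurable)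
        (ae_of_all _ fun s => by simpa [Real.norm_eq_abs] using hwb (s, f s))
    rw [← integral_const_mul, ← integral_add hintr (hintw.const_mul α)]
    exact integral_congr_ae (ae_of_all _ fun s => hfopt s)
end

section
/- Suppose V*(s) = sup_{u ∈ U(s)} { r(s,u) + α ∫ V*(s') Q(ds'|s,u) } with r bounded measurable and α ∈ (0,1), and the supremum attained by a measurable selector. Then the measurized value function V̄* defined by V̄*(ν) := sup over Markov policies {φₜ} of Σₜ αᵗ r̄(νₜ, φₜ) (with νₜ₊₁ = F(νₜ, φₜ), ν₀ = ν) satisfies V̄*(ν) = ∫_S V*(s) dν(s) for every probability measure ν on S; in particular V̄*(δ_s) = V*(s) for every s ∈ S. -/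
open MeasureTheory ProbabilityTheory

/-- Deterministic state-distribution recursion `νₜ₊₁ = F(νₜ, φₜ)`. -/
noncomputable def stateLaw {S U : Type*} [MeasurableSpace S] [MeasurableSpace U]
    (Q : Kernel (S × U) S) (φ : ℕ → Kernel S U) (ν₀ : Measure S) : ℕ → Measure S
  | 0 => ν₀
  | (t + 1) => measurizedF Q (φ t) (stateLaw Q φ ν₀ t)

section helpers
variable {S U : Type*} [MeasurableSpace S] [MeasurableSpace U]

lemma aux_bind_eq_map_snd {β : Type*} [MeasurableSpace β] (ν : Measure S) [IsProbabilityMeasure ν]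
    (κ : Kernel S β) [IsMarkovKernel κ] :
    ν.bind ⇑κ = (ν ⊗ₘ κ).map Prod.snd := by
  ext A hA
  rw [Measure.bind_apply hA (Kernel.measurable κ).aemeasurable, Measure.map_apply measurable_snd hA,
    Measure.compProd_apply (measurable_snd hA)]
  rfl

lemma aux_isProb_bind {β : Type*} [MeasurableSpace β] (ν : Measure S) [IsProbabilityMeasure ν]
    (κ : Kernel S β) [IsMarkovKernel κ] : IsProbabilityMeasure (ν.bind ⇑κ) := by
  rw [aux_bind_eq_map_snd]
  exact Measure.isProbabilityMeasure_map measurable_snd.aemeasurable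

lemma aux_integrable_of_bdd {β : Type*} [MeasurableSpace β] (μ : Measure β) [IsFiniteMeasure μ]
    {g : β → ℝ} (hg : Measurable g) {Cg : ℝ} (hb : ∀ x, |g x| ≤ Cg) : Integrable g μ :=
  ⟨hg.aestronglyMeasurable, HasFiniteIntegral.of_bounded (C := Cg) (ae_of_all _ fun x => by
    simpa [Real.norm_eq_abs] using hb x)⟩

lemma aux_abs_integral_le {β : Type*} [MeasurableSpace β] (μ : Measure β) [IsProbabilityMeasure μ]
    {g : β → ℝ} {Cg : ℝ} (hb : ∀ x, |g x| ≤ Cg) : |∫ x, g x ∂μ| ≤ Cg := by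
  have := norm_integral_le_of_norm_le_const (μ := μ) (f := g) (C := Cg)
    (ae_of_all _ fun x => by simpa [Real.norm_eq_abs] using hb x)
  simpa [Real.norm_eq_abs] using this

lemma aux_integral_bind {β : Type*} [MeasurableSpace β] (ν : Measure S) [IsProbabilityMeasure ν]
    (κ : Kernel S β) [IsMarkovKernel κ] {g : β → ℝ} (hg : Measurable g) {Cg : ℝ}
    (hb : ∀ x, |g x| ≤ Cg) :
    ∫ x, g x ∂(ν.bind ⇑κ) = ∫ s, ∫ x, g x ∂(κ s) ∂ν := by
  rw [aux_bind_eq_map_snd,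
    integral_map measurable_snd.aemeasurable hg.aestronglyMeasurable]
  exact Measure.integral_compProd (aux_integrable_of_bdd _ (hg.comp measurable_snd)
    (fun p => hb p.2))

variable (Q : Kernel (S × U) S) [IsMarkovKernel Q]

noncomputable def auxK (φ : Kernel S U) : Kernel S S := Q ∘ₖ (Kernel.id ×ₖ φ)

lemma auxK_apply (φ : Kernel S U) [IsMarkovKernel φ] (s : S) :
    auxK Q φ s = (φ s).bind (fun u => Q (s, u)) := by
  rw [auxK, Kernel.comp_apply, Kernel.prod_apply, Kernel.id_apply, Measure.dirac_prod]
  ext A hA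
  rw [Measure.bind_apply hA (Kernel.measurable Q).aemeasurable,
    lintegral_map (Kernel.measurable_coe Q hA) measurable_prodMk_left]
  exact (Measure.bind_apply (f := fun u => Q (s, u)) hA
    ((Kernel.measurable Q).comp measurable_prodMk_left).aemeasurable).symm

instance auxK_markov (φ : Kernel S U) [IsMarkovKernel φ] : IsMarkovKernel (auxK Q φ) := by
  rw [auxK]; infer_instance

lemma measurizedF_eq_bind (φ : Kernel S U) [IsMarkovKernel φ] (ν : Measure S) :
    measurizedF Q φ ν = ν.bind ⇑(auxK Q φ) := by
  have h : (fun s => (φ s).bind fun u => Q (s, u)) = ⇑(auxK Q φ) :=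
    funext fun s => (auxK_apply Q φ s).symm
  rw [measurizedF, h]

lemma aux_isProb_F (φ : Kernel S U) [IsMarkovKernel φ] (ν : Measure S) [IsProbabilityMeasure ν] :
    IsProbabilityMeasure (measurizedF Q φ ν) := by
  rw [measurizedF_eq_bind]; exact aux_isProb_bind ν _

variable {V : S → ℝ} {CV : ℝ}

lemma aux_QV_meas (hVm : Measurable V) : Measurable fun p : S × U => ∫ s', V s' ∂(Q p) :=
  (StronglyMeasurable.integral_kernel_prod_right' (κ := Q)
    ((hVm.comp measurable_snd).stronglyMeasurable)).measurable

lemma aux_QV_bdd (hVb : ∀ s, |V s| ≤ CV) (p : S × U) : |∫ s', V s' ∂(Q p)| ≤ CV :=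
  aux_abs_integral_le _ hVb

lemma aux_integral_F (hVm : Measurable V) (hVb : ∀ s, |V s| ≤ CV)
    (φ : Kernel S U) [IsMarkovKernel φ] (ν : Measure S) [IsProbabilityMeasure ν] :
    ∫ s, V s ∂(measurizedF Q φ ν) = ∫ s, ∫ u, (∫ s', V s' ∂(Q (s, u))) ∂(φ s) ∂ν := by
  rw [measurizedF_eq_bind, aux_integral_bind ν (auxK Q φ) hVm hVb]
  refine integral_congr_ae (ae_of_all _ fun s => ?_)
  dsimp only
  rw [auxK_apply]
  have h : (fun u => Q (s, u)) = ⇑(Q.comap (Prod.mk s) measurable_prodMk_left) :=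
    funext fun u => (Kernel.comap_apply ..).symm
  rw [h, aux_integral_bind (φ s) _ hVm hVb]
  refine integral_congr_ae (ae_of_all _ fun u => ?_)
  dsimp only
  rw [Kernel.comap_apply]

end helpers

section bellman
set_option linter.unusedSectionVars false
variable {S U : Type*} [MeasurableSpace S] [MeasurableSpace U]
    (Q : Kernel (S × U) S) [IsMarkovKernel Q]
    {Uset : S → Set U} (hUm : ∀ s, MeasurableSet (Uset s))
    {r : S × U → ℝ} (hrm : Measurable r) {C : ℝ} (hrb : ∀ p, |r p| ≤ C)
    {α : ℝ} (hα0 : 0 < α)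
    {V : S → ℝ} (hVm : Measurable V) {CV : ℝ} (hVb : ∀ s, |V s| ≤ CV)

include hrm hVm in
lemma aux_h_meas : Measurable fun p : S × U => r p + α * ∫ s', V s' ∂(Q p) :=
  hrm.add (measurable_const.mul (aux_QV_meas Q hVm))

include hrb hVb in
lemma aux_h_bdd (p : S × U) : |r p + α * ∫ s', V s' ∂(Q p)| ≤ C + |α| * CV := by
  calc |r p + α * ∫ s', V s' ∂(Q p)| ≤ |r p| + |α * ∫ s', V s' ∂(Q p)| := abs_add_le _ _
    _ ≤ C + |α| * CV := by
        refine add_le_add (hrb p) ?_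
        rw [abs_mul]
        exact mul_le_mul_of_nonneg_left (aux_QV_bdd Q hVb p) (abs_nonneg α)

include hrm hrb hVm hVb in
lemma aux_lhs (φ : Kernel S U) [IsMarkovKernel φ] (ν : Measure S) [IsProbabilityMeasure ν] :
    measurizedReward r φ ν + α * ∫ s, V s ∂(measurizedF Q φ ν)
      = ∫ s, ∫ u, (r (s, u) + α * ∫ s', V s' ∂(Q (s, u))) ∂(φ s) ∂ν := by
  have hQVm := aux_QV_meas Q hVm
  have hrmeas : Measurable fun s => ∫ u, r (s, u) ∂(φ s) :=
    (StronglyMeasurable.integral_kernel_prod_right' (κ := φ) hrm.stronglyMeasurable).measurable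
  have hQmeas : Measurable fun s => ∫ u, (∫ s', V s' ∂(Q (s, u))) ∂(φ s) :=
    (StronglyMeasurable.integral_kernel_prod_right' (κ := φ)
      hQVm.stronglyMeasurable).measurable
  have h1 : Integrable (fun s => ∫ u, r (s, u) ∂(φ s)) ν :=
    aux_integrable_of_bdd ν hrmeas (fun s => aux_abs_integral_le (φ s) (fun u => hrb (s, u)))
  have h2 : Integrable (fun s => α * ∫ u, (∫ s', V s' ∂(Q (s, u))) ∂(φ s)) ν :=
    (aux_integrable_of_bdd ν hQmeas (fun s =>
      aux_abs_integral_le (φ s) (fun u => aux_QV_bdd Q hVb (s, u)))).const_mul α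
  calc measurizedReward r φ ν + α * ∫ s, V s ∂(measurizedF Q φ ν)
      = (∫ s, ∫ u, r (s, u) ∂(φ s) ∂ν)
          + α * ∫ s, ∫ u, (∫ s', V s' ∂(Q (s, u))) ∂(φ s) ∂ν := by
        rw [measurizedReward, aux_integral_F Q hVm hVb φ ν]
    _ = ∫ s, (∫ u, r (s, u) ∂(φ s) + α * ∫ u, (∫ s', V s' ∂(Q (s, u))) ∂(φ s)) ∂ν := by
        rw [integral_add h1 h2, integral_const_mul]
    _ = ∫ s, ∫ u, (r (s, u) + α * ∫ s', V s' ∂(Q (s, u))) ∂(φ s) ∂ν := by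
        refine integral_congr_ae (ae_of_all _ fun s => ?_)
        dsimp only
        have i1 : Integrable (fun u => r (s, u)) (φ s) :=
          aux_integrable_of_bdd _ (hrm.comp measurable_prodMk_left) (fun u => hrb (s, u))
        have i2 : Integrable (fun u => α * ∫ s', V s' ∂(Q (s, u))) (φ s) :=
          (aux_integrable_of_bdd _ (hQVm.comp measurable_prodMk_left)
            (fun u => aux_QV_bdd Q hVb (s, u))).const_mul α
        rw [integral_add i1 i2, integral_const_mul]

include hUm hrm hrb hVm hVb in
lemma aux_step (hub : ∀ s, ∀ u ∈ Uset s, r (s, u) + α * ∫ s', V s' ∂(Q (s, u)) ≤ V s)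
    (φ : Kernel S U) [IsMarkovKernel φ] (hfeas : ∀ s, φ s (Uset s) = 1)
    (ν : Measure S) [IsProbabilityMeasure ν] :
    measurizedReward r φ ν + α * ∫ s, V s ∂(measurizedF Q φ ν) ≤ ∫ s, V s ∂ν := by
  rw [aux_lhs Q hrm hrb hVm hVb φ ν]
  have hQVm := aux_QV_meas Q hVm
  refine integral_mono
    (aux_integrable_of_bdd ν
      ((StronglyMeasurable.integral_kernel_prod_right' (κ := φ)
        (aux_h_meas Q hrm hVm).stronglyMeasurable).measurable)
      (fun s => aux_abs_integral_le (φ s) (fun u => aux_h_bdd Q hrb hVb (s, u))))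
    (aux_integrable_of_bdd ν hVm hVb) (fun s => ?_)
  have hae : ∀ᵐ u ∂(φ s), u ∈ Uset s := by
    rw [ae_iff]
    have : {u | ¬ u ∈ Uset s} = (Uset s)ᶜ := rfl
    rw [this, measure_compl (hUm s) (measure_ne_top _ _), hfeas s, measure_univ, tsub_self]
  calc ∫ u, (r (s, u) + α * ∫ s', V s' ∂(Q (s, u))) ∂(φ s)
      ≤ ∫ _u, V s ∂(φ s) := by
        refine integral_mono_ae
          (aux_integrable_of_bdd (φ s)
            ((aux_h_meas Q hrm hVm).comp measurable_prodMk_left)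
            (fun u => aux_h_bdd Q hrb hVb (s, u)))
          (integrable_const _) (hae.mono fun u hu => hub s u hu)
    _ = V s := by simp

include hrm hrb hVm hVb in
lemma aux_opt {f : S → U} (hfm : Measurable f)
    (hfopt : ∀ s, V s = r (s, f s) + α * ∫ s', V s' ∂(Q (s, f s)))
    (ν : Measure S) [IsProbabilityMeasure ν] :
    measurizedReward r (Kernel.deterministic f hfm) ν
      + α * ∫ s, V s ∂(measurizedF Q (Kernel.deterministic f hfm) ν) = ∫ s, V s ∂ν := by
  rw [aux_lhs Q hrm hrb hVm hVb _ ν]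
  refine integral_congr_ae (ae_of_all _ fun s => ?_)
  dsimp only
  have hsm : StronglyMeasurable fun u => r (s, u) + α * ∫ s', V s' ∂(Q (s, u)) :=
    ((aux_h_meas Q hrm hVm).comp measurable_prodMk_left).stronglyMeasurable
  rw [Kernel.deterministic_apply, integral_dirac' _ (f s) hsm, ← hfopt s]

end bellman

section reward
set_option linter.unusedSectionVars false
variable {S U : Type*} [MeasurableSpace S] [MeasurableSpace U]
    {r : S × U → ℝ} {C : ℝ} (hrb : ∀ p, |r p| ≤ C)

include hrb in
lemma aux_reward_bdd (φ : Kernel S U) [IsMarkovKernel φ] (ν : Measure S)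
    [IsProbabilityMeasure ν] : |measurizedReward r φ ν| ≤ C :=
  aux_abs_integral_le ν (fun s => aux_abs_integral_le (φ s) (fun u => hrb (s, u)))

end reward

open Filter Topology in
/-- Suppose `V*` (bounded, measurable) satisfies the discounted
optimality equation with an attaining measurable selector.  Then the measurized
value function — the supremum over feasible Markov policies `{φₜ}` of
`Σₜ αᵗ r̄(νₜ, φₜ)` along the deterministic recursion `νₜ₊₁ = F(νₜ, φₜ)` — equals
`∫ V* dν` for every probability measure `ν`; in particular it equals `V*(s)` at
every Dirac measure `δ_s`. -/
theorem stmt9 {S U : Type*} [MeasurableSpace S] [MeasurableSpace U]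
    (Q : Kernel (S × U) S) [IsMarkovKernel Q]
    (Uset : S → Set U) (hUm : ∀ s, MeasurableSet (Uset s))
    (r : S × U → ℝ) (hrm : Measurable r) (C : ℝ) (hrb : ∀ p, |r p| ≤ C)
    (α : ℝ) (hα0 : 0 < α) (hα1 : α < 1)
    (V : S → ℝ) (hVm : Measurable V) (CV : ℝ) (hVb : ∀ s, |V s| ≤ CV)
    (hub : ∀ s, ∀ u ∈ Uset s, r (s, u) + α * ∫ s', V s' ∂(Q (s, u)) ≤ V s)
    (f : S → U) (hfm : Measurable f) (hff : ∀ s, f s ∈ Uset s)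
    (hfopt : ∀ s, V s = r (s, f s) + α * ∫ s', V s' ∂(Q (s, f s))) :
    (∀ ν : Measure S, IsProbabilityMeasure ν →
      (⨆ π : {π : ℕ → Kernel S U //
          (∀ t, IsMarkovKernel (π t)) ∧ ∀ t s, (π : ℕ → Kernel S U) t s (Uset s) = 1},
        ∑' t : ℕ, α ^ t * measurizedReward r ((π : ℕ → Kernel S U) t)
          (stateLaw Q (π : ℕ → Kernel S U) ν t))
        = ∫ s, V s ∂ν) ∧
    (∀ s : S,
      (⨆ π : {π : ℕ → Kernel S U //
          (∀ t, IsMarkovKernel (π t)) ∧ ∀ t s, (π : ℕ → Kernel S U) t s (Uset s) = 1},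
        ∑' t : ℕ, α ^ t * measurizedReward r ((π : ℕ → Kernel S U) t)
          (stateLaw Q (π : ℕ → Kernel S U) (Measure.dirac s) t))
        = V s) := by
  have key : ∀ ν : Measure S, IsProbabilityMeasure ν →
      (⨆ π : {π : ℕ → Kernel S U //
          (∀ t, IsMarkovKernel (π t)) ∧ ∀ t s, (π : ℕ → Kernel S U) t s (Uset s) = 1},
        ∑' t : ℕ, α ^ t * measurizedReward r ((π : ℕ → Kernel S U) t)
          (stateLaw Q (π : ℕ → Kernel S U) ν t))
        = ∫ s, V s ∂ν := by
    intro ν hν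
    haveI := hν
    set Pol := {π : ℕ → Kernel S U //
      (∀ t, IsMarkovKernel (π t)) ∧ ∀ t s, (π : ℕ → Kernel S U) t s (Uset s) = 1} with hPol
    let πstar : Pol := ⟨fun _ => Kernel.deterministic f hfm, fun _ => inferInstance,
      fun t s => by rw [Kernel.deterministic_apply]; exact Measure.dirac_apply_of_mem (hff s)⟩
    haveI : Nonempty Pol := ⟨πstar⟩
    -- probability of state laws
    have hprob : ∀ (π : Pol) (t : ℕ), IsProbabilityMeasure (stateLaw Q π.1 ν t) := by
      intro π t
      induction t with
      | zero => exact hν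
      | succ t ih =>
          haveI := π.2.1 t
          haveI := ih
          exact aux_isProb_F Q (π.1 t) (stateLaw Q π.1 ν t)
    have hIb : ∀ (π : Pol) (t : ℕ), |∫ s, V s ∂(stateLaw Q π.1 ν t)| ≤ CV := by
      intro π t
      haveI := hprob π t
      exact aux_abs_integral_le _ hVb
    -- summability
    have hsum : ∀ π : Pol,
        Summable (fun t => α ^ t * measurizedReward r (π.1 t) (stateLaw Q π.1 ν t)) := by
      intro π
      refine Summable.of_norm_bounded (g := fun t => α ^ t * C)
        ((summable_geometric_of_lt_one hα0.le hα1).mul_right C) (fun t => ?_)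
      rw [Real.norm_eq_abs, abs_mul, abs_pow, abs_of_pos hα0]
      haveI := π.2.1 t
      haveI := hprob π t
      exact mul_le_mul_of_nonneg_left (aux_reward_bdd hrb _ _) (pow_nonneg hα0.le t)
    -- upper bound for all policies
    have hle : ∀ π : Pol,
        (∑' t : ℕ, α ^ t * measurizedReward r (π.1 t) (stateLaw Q π.1 ν t))
          ≤ ∫ s, V s ∂ν := by
      intro π
      have hpartial : ∀ n : ℕ,
          (∑ t ∈ Finset.range n, α ^ t * measurizedReward r (π.1 t) (stateLaw Q π.1 ν t))
            ≤ (∫ s, V s ∂ν) + α ^ n * CV := by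
        intro n
        have hteles : (∑ t ∈ Finset.range n,
            (α ^ t * (∫ s, V s ∂(stateLaw Q π.1 ν t))
              - α ^ (t + 1) * (∫ s, V s ∂(stateLaw Q π.1 ν (t + 1)))))
            = α ^ 0 * (∫ s, V s ∂(stateLaw Q π.1 ν 0))
              - α ^ n * (∫ s, V s ∂(stateLaw Q π.1 ν n)) :=
          Finset.sum_range_sub' (fun t => α ^ t * (∫ s, V s ∂(stateLaw Q π.1 ν t))) n
        have hsumle : (∑ t ∈ Finset.range n, α ^ t * measurizedReward r (π.1 t) (stateLaw Q π.1 ν t))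
            ≤ ∑ t ∈ Finset.range n,
              (α ^ t * (∫ s, V s ∂(stateLaw Q π.1 ν t))
                - α ^ (t + 1) * (∫ s, V s ∂(stateLaw Q π.1 ν (t + 1)))) := by
          refine Finset.sum_le_sum (fun t _ => ?_)
          haveI := π.2.1 t
          haveI := hprob π t
          have hst := aux_step Q hUm hrm hrb hVm hVb hub (π.1 t)
            (fun s => π.2.2 t s) (stateLaw Q π.1 ν t)
          have hst' : measurizedReward r (π.1 t) (stateLaw Q π.1 ν t)
              ≤ (∫ s, V s ∂(stateLaw Q π.1 ν t))
                - α * (∫ s, V s ∂(stateLaw Q π.1 ν (t + 1))) := by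
            have : stateLaw Q π.1 ν (t + 1) = measurizedF Q (π.1 t) (stateLaw Q π.1 ν t) := rfl
            rw [this]; linarith
          calc α ^ t * measurizedReward r (π.1 t) (stateLaw Q π.1 ν t)
              ≤ α ^ t * ((∫ s, V s ∂(stateLaw Q π.1 ν t))
                  - α * (∫ s, V s ∂(stateLaw Q π.1 ν (t + 1)))) :=
                mul_le_mul_of_nonneg_left hst' (pow_nonneg hα0.le t)
            _ = α ^ t * (∫ s, V s ∂(stateLaw Q π.1 ν t))
                  - α ^ (t + 1) * (∫ s, V s ∂(stateLaw Q π.1 ν (t + 1))) := by ring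
        have hlast : α ^ 0 * (∫ s, V s ∂(stateLaw Q π.1 ν 0))
              - α ^ n * (∫ s, V s ∂(stateLaw Q π.1 ν n))
            ≤ (∫ s, V s ∂ν) + α ^ n * CV := by
          have h1 : -(∫ s, V s ∂(stateLaw Q π.1 ν n)) ≤ CV :=
            (neg_le_abs _).trans (hIb π n)
          have h2 := mul_le_mul_of_nonneg_left h1 (pow_nonneg hα0.le n)
          have h0 : stateLaw Q π.1 ν 0 = ν := rfl
          rw [h0, pow_zero, one_mul]
          nlinarith [h2]
        exact hsumle.trans (hteles ▸ hlast)
      have htend := (hsum π).hasSum.tendsto_sum_nat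
      have hlim : Tendsto (fun n : ℕ => (∫ s, V s ∂ν) + α ^ n * CV) atTop
          (𝓝 (∫ s, V s ∂ν)) := by
        have := (tendsto_pow_atTop_nhds_zero_of_lt_one hα0.le hα1).mul_const CV
        simpa using tendsto_const_nhds.add this
      exact le_of_tendsto_of_tendsto' htend hlim hpartial
    -- equality for the stationary optimal policy
    have hstar : (∑' t : ℕ, α ^ t * measurizedReward r (πstar.1 t) (stateLaw Q πstar.1 ν t))
        = ∫ s, V s ∂ν := by
      have hpartial : ∀ n : ℕ,
          (∑ t ∈ Finset.range n, α ^ t * measurizedReward r (πstar.1 t) (stateLaw Q πstar.1 ν t))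
            = (∫ s, V s ∂ν) - α ^ n * (∫ s, V s ∂(stateLaw Q πstar.1 ν n)) := by
        intro n
        have hteles : (∑ t ∈ Finset.range n,
            (α ^ t * (∫ s, V s ∂(stateLaw Q πstar.1 ν t))
              - α ^ (t + 1) * (∫ s, V s ∂(stateLaw Q πstar.1 ν (t + 1)))))
            = α ^ 0 * (∫ s, V s ∂(stateLaw Q πstar.1 ν 0))
              - α ^ n * (∫ s, V s ∂(stateLaw Q πstar.1 ν n)) :=
          Finset.sum_range_sub' (fun t => α ^ t * (∫ s, V s ∂(stateLaw Q πstar.1 ν t))) n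
        have h0' : (∫ s, V s ∂ν) = α ^ 0 * (∫ s, V s ∂(stateLaw Q πstar.1 ν 0)) := by
          rw [pow_zero, one_mul]; rfl
        rw [h0', ← hteles]
        refine Finset.sum_congr rfl (fun t _ => ?_)
        haveI := hprob πstar t
        have hopt := aux_opt Q hrm hrb hVm hVb hfm hfopt (stateLaw Q πstar.1 ν t)
        have hst' : measurizedReward r (πstar.1 t) (stateLaw Q πstar.1 ν t)
            = (∫ s, V s ∂(stateLaw Q πstar.1 ν t))
              - α * (∫ s, V s ∂(stateLaw Q πstar.1 ν (t + 1))) := by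
          have h1 : stateLaw Q πstar.1 ν (t + 1)
              = measurizedF Q (πstar.1 t) (stateLaw Q πstar.1 ν t) := rfl
          rw [h1]
          have h2 : πstar.1 t = Kernel.deterministic f hfm := rfl
          rw [h2] at *
          linarith [hopt]
        rw [hst']; ring
      have hzero : Tendsto (fun n : ℕ => α ^ n * (∫ s, V s ∂(stateLaw Q πstar.1 ν n)))
          atTop (𝓝 0) := by
        have hgeo : Tendsto (fun n : ℕ => α ^ n * CV) atTop (𝓝 0) := by
          simpa using (tendsto_pow_atTop_nhds_zero_of_lt_one hα0.le hα1).mul_const CV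
        refine squeeze_zero_norm (fun n => ?_) hgeo
        rw [Real.norm_eq_abs, abs_mul, abs_pow, abs_of_pos hα0]
        exact mul_le_mul_of_nonneg_left (hIb πstar n) (pow_nonneg hα0.le n)
      have htend2 : Tendsto
          (fun n => ∑ t ∈ Finset.range n,
            α ^ t * measurizedReward r (πstar.1 t) (stateLaw Q πstar.1 ν t))
          atTop (𝓝 (∫ s, V s ∂ν)) := by
        have : Tendsto (fun n : ℕ => (∫ s, V s ∂ν)
            - α ^ n * (∫ s, V s ∂(stateLaw Q πstar.1 ν n))) atTop (𝓝 ((∫ s, V s ∂ν) - 0)) :=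
          tendsto_const_nhds.sub hzero
        rw [sub_zero] at this
        exact this.congr (fun n => (hpartial n).symm)
      exact tendsto_nhds_unique ((hsum πstar).hasSum.tendsto_sum_nat) htend2
    refine le_antisymm (ciSup_le hle) ?_
    calc ∫ s, V s ∂ν
        = ∑' t : ℕ, α ^ t * measurizedReward r (πstar.1 t) (stateLaw Q πstar.1 ν t) := hstar.symm
      _ ≤ _ := le_ciSup ⟨∫ s, V s ∂ν, Set.forall_mem_range.2 hle⟩ πstar
  refine ⟨key, fun s => ?_⟩
  rw [key (Measure.dirac s) inferInstance, integral_dirac' V s hVm.stronglyMeasurable]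
end

section
/- Let (ρ*, h̄*, φ*) satisfy the measurized average-reward optimality equations: ρ* + h̄*(ν) = sup_{φ ∈ Φ} { r̄(ν,φ) + h̄*(F(ν,φ)) } = r̄(ν,φ*) + h̄*(F(ν,φ*)) for all probability measures ν, with φ* independent of ν. Suppose ν_{φ*} is invariant for φ*, i.e., F(ν_{φ*}, φ*) = ν_{φ*}. Define the Lagrangian L(ν, φ, h̄) = r̄(ν,φ) + h̄(F(ν,φ)) − h̄(ν). Then: (a) L(ν, φ*, h̄*) = ρ* = r̄(ν_{φ*}, φ*) for all ν; (b) (ν_{φ*}, φ*, h̄*) is a saddle point: L(ν, φ, h̄*) ≤ L(ν_{φ*}, φ*, h̄*) ≤ L(ν_{φ*}, φ*, h̄) for all ν, φ, h̄; (c) (ν_{φ*}, φ*) maximizes r̄(ν,φ) over all equilibria {(ν,φ) : F(ν,φ) = ν}. -/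
open MeasureTheory ProbabilityTheory

/-- The Lagrangian of the equilibrium problem:
`L(ν, φ, h̄) = r̄(ν,φ) + h̄(F(ν,φ)) − h̄(ν)`. -/
noncomputable def lagrangianL {S U : Type*} [MeasurableSpace S] [MeasurableSpace U]
    (Q : Kernel (S × U) S) (r : S × U → ℝ)
    (ν : Measure S) (φ : Kernel S U) (h : Measure S → ℝ) : ℝ :=
  measurizedReward r φ ν + h (measurizedF Q φ ν) - h ν

/-- Let `(ρ*, h̄*, φ*)` satisfy the measurized average-reward
optimality equations with `φ*` independent of `ν`, and let `ν_{φ*}` be invariant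
for `φ*`.  Then (a) `L(ν, φ*, h̄*) = ρ* = r̄(ν_{φ*}, φ*)` for all `ν`;
(b) `(ν_{φ*}, φ*, h̄*)` is a saddle point of `L`; (c) `(ν_{φ*}, φ*)` maximizes
`r̄` over all equilibria. -/
theorem stmt12 {S U : Type*} [MeasurableSpace S] [MeasurableSpace U]
    (Q : Kernel (S × U) S) [IsMarkovKernel Q]
    (Uset : S → Set U)
    (r : S × U → ℝ)
    (ρ : ℝ) (hbar : Measure S → ℝ)
    (φstar : Kernel S U) [IsMarkovKernel φstar] (hφfeas : ∀ s, φstar s (Uset s) = 1)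
    (hsup : ∀ ν : Measure S, IsProbabilityMeasure ν →
      ∀ φ : Kernel S U, IsMarkovKernel φ → (∀ s, φ s (Uset s) = 1) →
        measurizedReward r φ ν + hbar (measurizedF Q φ ν) ≤ ρ + hbar ν)
    (heq : ∀ ν : Measure S, IsProbabilityMeasure ν →
      ρ + hbar ν = measurizedReward r φstar ν + hbar (measurizedF Q φstar ν))
    (νstar : Measure S) [IsProbabilityMeasure νstar]
    (hinv : measurizedF Q φstar νstar = νstar) :
    (∀ ν : Measure S, IsProbabilityMeasure ν →
        lagrangianL Q r ν φstar hbar = ρ ∧ ρ = measurizedReward r φstar νstar) ∧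
    ((∀ ν : Measure S, IsProbabilityMeasure ν →
        ∀ φ : Kernel S U, IsMarkovKernel φ → (∀ s, φ s (Uset s) = 1) →
          lagrangianL Q r ν φ hbar ≤ lagrangianL Q r νstar φstar hbar) ∧
      (∀ h' : Measure S → ℝ,
          lagrangianL Q r νstar φstar hbar ≤ lagrangianL Q r νstar φstar h')) ∧
    (∀ ν : Measure S, IsProbabilityMeasure ν →
      ∀ φ : Kernel S U, IsMarkovKernel φ → (∀ s, φ s (Uset s) = 1) →
        measurizedF Q φ ν = ν →
          measurizedReward r φ ν ≤ measurizedReward r φstar νstar) := by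
  have hrho : ρ = measurizedReward r φstar νstar := by
    have := heq νstar inferInstance
    rw [hinv] at this
    linarith
  have hLa : ∀ ν : Measure S, IsProbabilityMeasure ν →
      lagrangianL Q r ν φstar hbar = ρ := by
    intro ν hν
    have := heq ν hν
    simp only [lagrangianL]
    linarith
  have hLstar : lagrangianL Q r νstar φstar hbar = ρ := hLa νstar inferInstance
  refine ⟨fun ν hν => ⟨hLa ν hν, hrho⟩, ⟨?_, ?_⟩, ?_⟩
  · intro ν hν φ hMφ hφ
    have := hsup ν hν φ hMφ hφ
    rw [hLstar]
    simp only [lagrangianL]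
    linarith
  · intro h'
    simp only [lagrangianL, hinv]
    linarith
  · intro ν hν φ hMφ hφ hfix
    have h1 := hsup ν hν φ hMφ hφ
    rw [hfix] at h1
    linarith
end

section
/- Suppose (ρ*, h*, f*) solves the stochastic average-reward optimality equations: ρ* + h*(s) = sup_{u ∈ U(s)} { r(s,u) + ∫ h*(s') Q(ds'|s,u) } = r(s, f*(s)) + ∫ h*(s') Q(ds'|s, f*(s)) for all s ∈ S, with h* integrable. Define h̄*(ν) = ∫ h* dν and let φ_{f*}(·|s) = δ_{f*(s)}. Then (ρ*, h̄*, φ_{f*}) solves the measurized average-reward optimality equations: ρ* + h̄*(ν) = sup_{φ ∈ Φ} { r̄(ν,φ) + h̄*(F(ν,φ)) } = r̄(ν, φ_{f*}) + h̄*(F(ν, φ_{f*})) for every probability measure ν on S. -/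
open MeasureTheory ProbabilityTheory

section AuxBind
variable {S T : Type*} [MeasurableSpace S] [MeasurableSpace T]

lemma bind_eq_map_snd (ν : Measure S) [SFinite ν] (κ : Kernel S T) [IsSFiniteKernel κ] :
    ν.bind (fun s => κ s) = (ν ⊗ₘ κ).map Prod.snd := by
  ext A hA
  rw [Measure.map_apply measurable_snd hA,
    Measure.compProd_apply (measurable_snd hA),
    Measure.bind_apply hA (Kernel.measurable κ).aemeasurable]
  rfl

lemma integral_bind_kernel (ν : Measure S) [IsProbabilityMeasure ν] (κ : Kernel S T)
    [IsMarkovKernel κ] {g : T → ℝ} (hg : Measurable g)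
    (hint : Integrable g (ν.bind (fun s => κ s))) :
    (∫ t, g t ∂(ν.bind fun s => κ s)) = (∫ s, ∫ t, g t ∂(κ s) ∂ν) ∧
      (∀ᵐ s ∂ν, Integrable g (κ s)) ∧
      Integrable (fun s => ∫ t, g t ∂(κ s)) ν := by
  rw [bind_eq_map_snd] at hint ⊢
  have hsnd : Integrable (fun p : S × T => g p.2) (ν ⊗ₘ κ) := by
    rwa [integrable_map_measure hg.aestronglyMeasurable measurable_snd.aemeasurable] at hint
  have h2 := (Measure.integrable_compProd_iff
    (hg.comp measurable_snd).aestronglyMeasurable).mp hsnd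
  refine ⟨?_, h2.1, ?_⟩
  · rw [integral_map measurable_snd.aemeasurable hg.aestronglyMeasurable,
      Measure.integral_compProd hsnd]
  · refine h2.2.mono' ?_ ?_
    · exact (StronglyMeasurable.integral_kernel_prod_right
        (f := fun s t => g t) (hg.comp measurable_snd).stronglyMeasurable).aestronglyMeasurable
    · filter_upwards with s
      exact norm_integral_le_integral_norm _

end AuxBind

section AuxJoint
variable {S U : Type*} [MeasurableSpace S] [MeasurableSpace U]

lemma bind_map_prod_mk (s : S) (μ : Measure U) (Q : Kernel (S × U) S) :
    (μ.map (Prod.mk s)).bind (fun p => Q p) = μ.bind (fun u => Q (s, u)) := by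
  ext B hB
  rw [Measure.bind_apply hB (Kernel.measurable Q).aemeasurable,
    lintegral_map (Q.measurable_coe hB) measurable_prodMk_left,
    Measure.bind_apply hB
      (show Measurable fun u => Q (s, u) from
        (Kernel.measurable Q).comp measurable_prodMk_left).aemeasurable]

lemma joint_apply (Q : Kernel (S × U) S) [IsMarkovKernel Q] (φ : Kernel S U) [IsMarkovKernel φ]
    (s : S) : (Q ∘ₖ (Kernel.id ×ₖ φ)) s = (φ s).bind (fun u => Q (s, u)) := by
  rw [Kernel.comp_apply, Kernel.prod_apply, Kernel.id_apply, Measure.dirac_prod,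
    bind_map_prod_mk]

lemma measurizedF_eq (Q : Kernel (S × U) S) [IsMarkovKernel Q] (φ : Kernel S U)
    [IsMarkovKernel φ] (ν : Measure S) :
    measurizedF Q φ ν = ν.bind (fun s => (Q ∘ₖ (Kernel.id ×ₖ φ)) s) := by
  unfold measurizedF
  congr 1
  funext s
  rw [joint_apply]

end AuxJoint

/-- If `(ρ*, h*, f*)` solves the stochastic average-reward
optimality equations, then `(ρ*, h̄*, φ_{f*})`, where `h̄*(ν) = ∫ h* dν` and
`φ_{f*}` is the kernel concentrated on `f*`, solves the measurized
average-reward optimality equations at every probability measure `ν`. -/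
theorem stmt13 {S U : Type*} [MeasurableSpace S] [MeasurableSpace U]
    (Q : Kernel (S × U) S) [IsMarkovKernel Q]
    (Uset : S → Set U) (hUm : ∀ s, MeasurableSet (Uset s))
    (r : S × U → ℝ) (hrm : Measurable r) (C : ℝ) (hrb : ∀ p, |r p| ≤ C)
    (ρ : ℝ) (h : S → ℝ) (hhm : Measurable h)
    (hhint : ∀ ν : Measure S, IsProbabilityMeasure ν → Integrable h ν)
    (hhQ : ∀ p : S × U, Integrable h (Q p))
    (f : S → U) (hfm : Measurable f) (hff : ∀ s, f s ∈ Uset s)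
    (hsup : ∀ s, ∀ u ∈ Uset s, r (s, u) + ∫ s', h s' ∂(Q (s, u)) ≤ ρ + h s)
    (hsel : ∀ s, ρ + h s = r (s, f s) + ∫ s', h s' ∂(Q (s, f s))) :
    ∀ ν : Measure S, IsProbabilityMeasure ν →
      (∀ φ : Kernel S U, IsMarkovKernel φ → (∀ s, φ s (Uset s) = 1) →
        measurizedReward r φ ν + ∫ s, h s ∂(measurizedF Q φ ν)
          ≤ ρ + ∫ s, h s ∂ν) ∧
      ρ + ∫ s, h s ∂ν
        = measurizedReward r (Kernel.deterministic f hfm) ν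
          + ∫ s, h s ∂(measurizedF Q (Kernel.deterministic f hfm) ν) := by
  intro ν hν
  have hbindprob : ∀ (κ : Kernel S S), IsMarkovKernel κ →
      IsProbabilityMeasure (ν.bind (fun s => κ s)) := by
    intro κ hκ
    rw [bind_eq_map_snd]
    exact Measure.isProbabilityMeasure_map measurable_snd.aemeasurable
  constructor
  · -- inequality for an arbitrary feasible kernel φ
    intro φ hφM hφU
    haveI := hφM
    set κ : Kernel S S := Q ∘ₖ (Kernel.id ×ₖ φ) with hκdef
    have hFeq : measurizedF Q φ ν = ν.bind (fun s => κ s) := measurizedF_eq Q φ ν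
    haveI : IsProbabilityMeasure (ν.bind (fun s => κ s)) := hbindprob κ inferInstance
    have hint : Integrable h (ν.bind (fun s => κ s)) := hhint _ inferInstance
    obtain ⟨heq, hae, houter⟩ := integral_bind_kernel ν κ hhm hint
    rw [hFeq, heq]
    -- integrability of s ↦ ∫ u, r (s, u) ∂(φ s)
    have hrint : ∀ s : S, Integrable (fun u => r (s, u)) (φ s) := fun s =>
      (integrable_const C).mono' (hrm.comp measurable_prodMk_left).aestronglyMeasurable
        (Filter.Eventually.of_forall fun u => by simpa using hrb (s, u))
    have hRmeas : StronglyMeasurable fun s => ∫ u, r (s, u) ∂(φ s) :=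
      StronglyMeasurable.integral_kernel_prod_right
        (f := fun s u => r (s, u)) hrm.stronglyMeasurable
    have hRint : Integrable (fun s => ∫ u, r (s, u) ∂(φ s)) ν := by
      refine (integrable_const C).mono' hRmeas.aestronglyMeasurable ?_
      filter_upwards with s
      have := norm_integral_le_of_norm_le_const
        (μ := φ s) (C := C) (f := fun u => r (s, u))
        (Filter.Eventually.of_forall fun u => by simpa using hrb (s, u))
      simpa using this
    rw [measurizedReward, ← integral_add hRint houter]
    -- pointwise (a.e.) bound
    have hptw : ∀ᵐ s ∂ν,
        (∫ u, r (s, u) ∂(φ s)) + (∫ t, h t ∂(κ s)) ≤ ρ + h s := by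
      filter_upwards [hae] with s hs
      have hκs : κ s = (φ s).bind
          (fun u => (Q.comap (Prod.mk s) measurable_prodMk_left) u) := by
        rw [joint_apply]
        rfl
      rw [hκs] at hs ⊢
      obtain ⟨heq2, _, _⟩ := integral_bind_kernel (φ s)
        (Q.comap (Prod.mk s) measurable_prodMk_left) hhm hs
      -- integrability of u ↦ ∫ h dQ(s,u) on φ s
      obtain ⟨_, _, hQint⟩ := integral_bind_kernel (φ s)
        (Q.comap (Prod.mk s) measurable_prodMk_left) hhm hs
      rw [heq2, ← integral_add (hrint s) hQint]
      have hcompl : (φ s) (Uset s)ᶜ = 0 := by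
        have := measure_compl (μ := φ s) (hUm s) (measure_ne_top _ _)
        rw [hφU s, measure_univ] at this
        simpa using this
      have hUae : ∀ᵐ u ∂(φ s), u ∈ Uset s := mem_ae_iff.mpr (by simpa using hcompl)
      have hle : ∀ᵐ u ∂(φ s),
          r (s, u) + (∫ t, h t ∂((Q.comap (Prod.mk s) measurable_prodMk_left) u))
            ≤ ρ + h s := by
        filter_upwards [hUae] with u hu
        have := hsup s u hu
        rwa [Kernel.comap_apply]
      calc ∫ u, (r (s, u) + ∫ t, h t ∂((Q.comap (Prod.mk s) measurable_prodMk_left) u)) ∂(φ s)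
          ≤ ∫ _u, (ρ + h s) ∂(φ s) :=
            integral_mono_ae ((hrint s).add hQint) (integrable_const _) hle
        _ = ρ + h s := by simp
    calc ∫ s, ((∫ u, r (s, u) ∂(φ s)) + ∫ t, h t ∂(κ s)) ∂ν
        ≤ ∫ s, (ρ + h s) ∂ν :=
          integral_mono_ae (hRint.add houter) ((integrable_const ρ).add (hhint ν hν)) hptw
      _ = ρ + ∫ s, h s ∂ν := by
          rw [integral_add (integrable_const ρ) (hhint ν hν)]; simp
  · -- equality for the deterministic selector
    set κ : Kernel S S := Q ∘ₖ (Kernel.id ×ₖ Kernel.deterministic f hfm) with hκdef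
    have hκs : ∀ s, κ s = Q (s, f s) := by
      intro s
      rw [joint_apply, Kernel.deterministic_apply,
        Measure.dirac_bind
          (show Measurable fun u => Q (s, u) from
            (Kernel.measurable Q).comp measurable_prodMk_left)]
    have hFeq : measurizedF Q (Kernel.deterministic f hfm) ν = ν.bind (fun s => κ s) :=
      measurizedF_eq Q _ ν
    haveI : IsProbabilityMeasure (ν.bind (fun s => κ s)) := hbindprob κ inferInstance
    have hint : Integrable h (ν.bind (fun s => κ s)) := hhint _ inferInstance
    obtain ⟨heq, hae, houter⟩ := integral_bind_kernel ν κ hhm hint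
    have hRdet : measurizedReward r (Kernel.deterministic f hfm) ν
        = ∫ s, r (s, f s) ∂ν := by
      unfold measurizedReward
      refine integral_congr_ae (Filter.Eventually.of_forall fun s => ?_)
      show (∫ u, r (s, u) ∂((Kernel.deterministic f hfm) s)) = r (s, f s)
      rw [Kernel.deterministic_apply]
      exact integral_dirac' _ _ (hrm.comp measurable_prodMk_left).stronglyMeasurable
    have hrint' : Integrable (fun s => r (s, f s)) ν :=
      (integrable_const C).mono'
        ((hrm.comp (measurable_id.prodMk hfm)).aestronglyMeasurable)
        (Filter.Eventually.of_forall fun s => by simpa using hrb (s, f s))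
    have houter' : Integrable (fun s => ∫ s', h s' ∂(Q (s, f s))) ν := by
      have : (fun s => ∫ s', h s' ∂(Q (s, f s))) = fun s => ∫ t, h t ∂(κ s) := by
        funext s; rw [hκs]
      rw [this]; exact houter
    rw [hFeq, heq, hRdet]
    have : ∀ s, (∫ t, h t ∂(κ s)) = ∫ s', h s' ∂(Q (s, f s)) := fun s => by rw [hκs]
    simp_rw [this]
    rw [← integral_add hrint' houter']
    have := integral_congr_ae (μ := ν)
      (Filter.Eventually.of_forall fun s => (hsel s))
    rw [← this, integral_add (integrable_const ρ) (hhint ν hν)]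
    simp
end

section
/- Consider the linear program inf_ρ,h ρ subject to ρ ≥ r(s,u) + ∫ h(s')Q(ds'|s,u) − h(s) for all feasible (s,u). If (ρ, h) is feasible for this LP and (ν, φ) is an equilibrium (ν = F(ν,φ), φ(U(s)|s) = 1), with r and h suitably integrable, then ρ ≥ r̄(ν, φ) = ∫∫ r(s,u) φ(du|s) dν(s). Hence the optimal LP value is an upper bound on the optimal equilibrium reward (weak duality between the average-reward LP and the equilibrium problem). -/
open MeasureTheory ProbabilityTheory

section Aux

variable {α β : Type*} [MeasurableSpace α] [MeasurableSpace β]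

lemma aux_integrable (μ : Measure α) [IsProbabilityMeasure μ] {f : α → ℝ}
    (hf : Measurable f) {C : ℝ} (hb : ∀ x, |f x| ≤ C) : Integrable f μ :=
  ⟨hf.aestronglyMeasurable,
    HasFiniteIntegral.of_bounded (Filter.Eventually.of_forall fun x => by
      simpa [Real.norm_eq_abs] using hb x)⟩

lemma aux_abs_integral (μ : Measure α) [IsProbabilityMeasure μ] {f : α → ℝ}
    (hf : Measurable f) {C : ℝ} (hb : ∀ x, |f x| ≤ C) : |∫ x, f x ∂μ| ≤ C := by
  have hint := aux_integrable μ hf hb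
  have h1 : |∫ x, f x ∂μ| ≤ ∫ x, |f x| ∂μ := by
    simpa [Real.norm_eq_abs] using norm_integral_le_integral_norm (μ := μ) f
  have h2 : ∫ x, |f x| ∂μ ≤ ∫ _x, C ∂μ :=
    integral_mono hint.abs (integrable_const C) fun x => hb x
  have h3 : ∫ _x, C ∂μ = C := by simp
  linarith

/-- Bochner integral over a bind of a probability measure with a Markov kernel,
for bounded measurable real functions. -/
lemma aux_integral_bind_s18 (μ : Measure α) [IsProbabilityMeasure μ]
    (K : Kernel α β) [IsMarkovKernel K] {f : β → ℝ} (hf : Measurable f)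
    {C : ℝ} (hb : ∀ x, |f x| ≤ C) :
    ∫ x, f x ∂(μ.bind K) = ∫ a, ∫ x, f x ∂(K a) ∂μ := by
  have hbind : μ.bind ⇑K = (μ ⊗ₘ K).snd := by
    ext A hA
    rw [Measure.bind_apply hA K.measurable.aemeasurable, Measure.snd_apply hA,
      Measure.compProd_apply (measurable_snd hA)]
    rfl
  have hint : Integrable (fun p : α × β => f p.2) (μ ⊗ₘ K) :=
    ⟨(hf.comp measurable_snd).aestronglyMeasurable,
      HasFiniteIntegral.of_bounded (C := C) (Filter.Eventually.of_forall fun p => by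
        simpa [Real.norm_eq_abs] using hb p.2)⟩
  rw [hbind, Measure.snd,
    integral_map measurable_snd.aemeasurable hf.aestronglyMeasurable,
    Measure.integral_compProd hint]

end Aux

/-- Weak duality between the average-reward LP and the
equilibrium problem: if `(ρ, h)` is feasible for the LP
(`ρ ≥ r(s,u) + ∫ h dQ(·|s,u) − h(s)` on the feasibility set) and `(ν, φ)` is a
feasible equilibrium, then `ρ ≥ r̄(ν, φ)`. -/
theorem stmt18 {S U : Type*} [MeasurableSpace S] [MeasurableSpace U]
    (Q : Kernel (S × U) S) [IsMarkovKernel Q]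
    (Uset : S → Set U) (hUm : ∀ s, MeasurableSet (Uset s))
    (r : S × U → ℝ) (hrm : Measurable r) (C : ℝ) (hrb : ∀ p, |r p| ≤ C)
    (ρ : ℝ) (h : S → ℝ) (hhm : Measurable h) (Ch : ℝ) (hhb : ∀ s, |h s| ≤ Ch)
    (hfeas : ∀ s, ∀ u ∈ Uset s,
      r (s, u) + (∫ s', h s' ∂(Q (s, u))) - h s ≤ ρ)
    (ν : Measure S) [IsProbabilityMeasure ν]
    (φ : Kernel S U) [IsMarkovKernel φ] (hφfeas : ∀ s, φ s (Uset s) = 1)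
    (hinv : measurizedF Q φ ν = ν) :
    measurizedReward r φ ν ≤ ρ := by
  classical
  -- the "expected h after one step" function
  set I : S × U → ℝ := fun p => ∫ s', h s' ∂(Q p) with hI_def
  have hIm : Measurable I := by
    have := (hhm.stronglyMeasurable.comp_measurable
      (measurable_snd : Measurable fun p : (S × U) × S => p.2)).integral_kernel_prod_right'
      (κ := Q)
    exact this.measurable
  have hIb : ∀ p, |I p| ≤ Ch := fun p => aux_abs_integral (Q p) hhm hhb
  -- pointwise inequality after integrating in `u`
  set a : S → ℝ := fun s => ∫ u, r (s, u) ∂(φ s) with ha_def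
  set b : S → ℝ := fun s => ∫ u, I (s, u) ∂(φ s) with hb_def
  have ham : Measurable a := (hrm.stronglyMeasurable.integral_kernel_prod_right'
    (κ := φ)).measurable
  have hbm : Measurable b := (hIm.stronglyMeasurable.integral_kernel_prod_right'
    (κ := φ)).measurable
  have hab : ∀ s, |a s| ≤ C := fun s =>
    aux_abs_integral (φ s) (hrm.comp measurable_prodMk_left) fun u => hrb (s, u)
  have hbb : ∀ s, |b s| ≤ Ch := fun s =>
    aux_abs_integral (φ s) (hIm.comp measurable_prodMk_left) fun u => hIb (s, u)
  have claim1 : ∀ s, a s + b s ≤ ρ + h s := by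
    intro s
    have hae : ∀ᵐ u ∂(φ s), u ∈ Uset s := by
      rw [Filter.eventually_iff, mem_ae_iff]
      have := (prob_compl_eq_zero_iff (hUm s)).2 (hφfeas s)
      simpa using this
    have hint_r : Integrable (fun u => r (s, u)) (φ s) :=
      aux_integrable (φ s) (hrm.comp measurable_prodMk_left) fun u => hrb (s, u)
    have hint_I : Integrable (fun u => I (s, u)) (φ s) :=
      aux_integrable (φ s) (hIm.comp measurable_prodMk_left) fun u => hIb (s, u)
    have hle : ∫ u, (r (s, u) + I (s, u)) ∂(φ s) ≤ ∫ _u, (ρ + h s) ∂(φ s) := by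
      refine integral_mono_ae (hint_r.add hint_I) (integrable_const _) ?_
      filter_upwards [hae] with u hu
      have := hfeas s u hu
      simp only [hI_def]
      linarith
    rw [integral_add hint_r hint_I, integral_const] at hle
    simpa using hle
  -- integrate over ν
  have hint_a : Integrable a ν := aux_integrable ν ham hab
  have hint_b : Integrable b ν := aux_integrable ν hbm hbb
  have hint_h : Integrable h ν := aux_integrable ν hhm hhb
  have hle2 : ∫ s, a s ∂ν + ∫ s, b s ∂ν ≤ ρ + ∫ s, h s ∂ν := by
    have : ∫ s, (a s + b s) ∂ν ≤ ∫ s, (ρ + h s) ∂ν :=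
      integral_mono (hint_a.add hint_b) ((integrable_const ρ).add hint_h) claim1
    rwa [integral_add hint_a hint_b, integral_add (integrable_const ρ) hint_h,
      integral_const, probReal_univ, smul_eq_mul, one_mul] at this
  -- the invariance cancels the h-terms: ∫ b dν = ∫ h dν
  have hbh : ∫ s, b s ∂ν = ∫ s, h s ∂ν := by
    -- the composed kernel
    set K : Kernel S S :=
      Q ∘ₖ ((Kernel.deterministic (id : S → S) measurable_id) ×ₖ φ) with hK_def
    have hK : ∀ s, K s = (φ s).bind (fun u => Q (s, u)) := by
      intro s
      ext A hA
      have hm : Measurable fun u => Q (s, u) :=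
        (Kernel.measurable Q).comp measurable_prodMk_left
      rw [hK_def, Kernel.comp_apply' _ _ _ hA, Measure.bind_apply hA hm.aemeasurable,
        Kernel.prod_apply, Kernel.deterministic_apply]
      rw [MeasureTheory.lintegral_prod _ (Kernel.measurable_coe Q hA).aemeasurable]
      rw [lintegral_dirac' _ ?_]
      · simp
      · exact (Measurable.lintegral_kernel_prod_right'
          (κ := Kernel.const S (φ s)) (Kernel.measurable_coe Q hA))
    have hFK : measurizedF Q φ ν = ν.bind ⇑K := by
      rw [measurizedF]
      congr 1
      funext s
      exact (hK s).symm
    have step1 : ∫ s, h s ∂ν = ∫ s, ∫ s', h s' ∂(K s) ∂ν := by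
      conv_lhs => rw [← hinv, hFK]
      exact aux_integral_bind_s18 ν K hhm hhb
    have step2 : ∀ s, ∫ s', h s' ∂(K s) = b s := by
      intro s
      rw [hK s]
      have hcoe : (fun u => Q (s, u)) = ⇑(Q.comap (fun u => (s, u)) measurable_prodMk_left) := by
        funext u
        rw [Kernel.comap_apply]
      rw [hcoe, aux_integral_bind_s18 (φ s) (Q.comap (fun u => (s, u)) measurable_prodMk_left)
        hhm hhb]
      simp only [Kernel.comap_apply, hb_def, hI_def]
    rw [step1]
    exact integral_congr_ae (Filter.Eventually.of_forall fun s => (step2 s).symm)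
  have : measurizedReward r φ ν = ∫ s, a s ∂ν := rfl
  rw [this]
  linarith [hle2, hbh]
end
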